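/- Let E = V(x^3+y^3+z^3) and τ2(a:b:c) = (b:a:cε), ε a primitive 3rd root of unity. Then U_{τ2} := {p ∈ E : p - τ2(p) ∈ E[3]} equals E[3]. -/
import Mathlib


open scoped Classical

noncomputable section

/-- Affine representatives `(a, b, c)` of points `(a : b : c)` of `ℙ²`. -/
abbrev Pt (k : Type*) := k × k × k

variable {k : Type*} [Field k]

/-- Projective equality of representatives: `q` is a nonzero scalar multiple of `p`. -/
def projEq (p q : Pt k) : Prop :=
  ∃ t : k, t ≠ 0 ∧ q = (t * p.1, t * p.2.1, t * p.2.2)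

/-- The Hesse cubic `x³ + y³ + z³ - 3λxyz = 0`. -/
def onHesse (lam : k) (p : Pt k) : Prop :=
  p.1 ^ 3 + p.2.1 ^ 3 + p.2.2 ^ 3 - 3 * lam * p.1 * p.2.1 * p.2.2 = 0

/-- The zero element `o_E = (1 : -1 : 0)` of the group law. -/
def oE : Pt k := (1, -1, 0)

/-- First chord formula for the addition on the Hesse cubic:
`p + q = (acβ² - b²αγ : bcα² - a²βγ : abγ² - c²αβ)`. -/
def add1 (p q : Pt k) : Pt k :=
  (p.1 * p.2.2 * q.2.1 ^ 2 - p.2.1 ^ 2 * q.1 * q.2.2,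
   p.2.1 * p.2.2 * q.1 ^ 2 - p.1 ^ 2 * q.2.1 * q.2.2,
   p.1 * p.2.1 * q.2.2 ^ 2 - p.2.2 ^ 2 * q.1 * q.2.1)

/-- Alternate chord formula for the addition on the Hesse cubic:
`p + q = (abα² - c²βγ : acγ² - b²αβ : bcβ² - a²αγ)`. -/
def add2 (p q : Pt k) : Pt k :=
  (p.1 * p.2.1 * q.1 ^ 2 - p.2.2 ^ 2 * q.2.1 * q.2.2,
   p.1 * p.2.2 * q.2.2 ^ 2 - p.2.1 ^ 2 * q.1 * q.2.1,
   p.2.1 * p.2.2 * q.2.1 ^ 2 - p.1 ^ 2 * q.1 * q.2.2)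

/-- The addition on the Hesse cubic: use the first formula when it is defined
(nonzero), otherwise the alternate one. -/
def hesseAdd (p q : Pt k) : Pt k :=
  if add1 p q ≠ (0, 0, 0) then add1 p q else add2 p q

/-- The inverse `(a : b : c) ↦ (b : a : c)`. -/
def hesseNeg (p : Pt k) : Pt k := (p.2.1, p.1, p.2.2)

/-- Subtraction: `p - q = p + (-q)`. -/
def hesseSub (p q : Pt k) : Pt k := hesseAdd p (hesseNeg q)

/-- `nP n p` is a representative of `np = p + ⋯ + p` (`n` summands). -/
def nP : ℕ → Pt k → Pt k
  | 0, _ => oE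
  | n + 1, p => hesseAdd (nP n p) p

/-- `p` is an `n`-torsion point: `np = o_E`. -/
def isTor (n : ℕ) (p : Pt k) : Prop := projEq (nP n p) (oE : Pt k)

/-- The automorphism `τ₂(a:b:c) = (b:a:cε)` of the Fermat cubic. -/
def tau2 {k : Type*} [Field k] (eps : k) (p : Pt k) : Pt k := (p.2.1, p.1, p.2.2 * eps)

section Aux

variable {k : Type*} [Field k]

omit [Field k] in
private lemma trip_ext {x y z x' y' z' : k} (h1 : x = x') (h2 : y = y') (h3 : z = z') :
    ((x, y, z) : Pt k) = (x', y', z') := by subst h1 h2 h3; rfl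

private lemma ne_fst {x y z : k} (h : x ≠ 0) : ((x, y, z) : Pt k) ≠ (0, 0, 0) :=
  fun hh => h (congrArg Prod.fst hh)

private lemma ne_snd {x y z : k} (h : y ≠ 0) : ((x, y, z) : Pt k) ≠ (0, 0, 0) :=
  fun hh => h (congrArg (fun p => p.2.1) hh)

private lemma ne_trd {x y z : k} (h : z ≠ 0) : ((x, y, z) : Pt k) ≠ (0, 0, 0) :=
  fun hh => h (congrArg (fun p => p.2.2) hh)

private lemma hesseAdd_of_add1_ne (p q : Pt k) (h : add1 p q ≠ (0, 0, 0)) :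
    hesseAdd p q = add1 p q := if_pos h

private lemma hesseAdd_of_add1_eq (p q : Pt k) (h : add1 p q = (0, 0, 0)) :
    hesseAdd p q = add2 p q := by rw [hesseAdd, if_neg (not_not.2 h)]

private lemma cube_eq_zero {x : k} (h : x ^ 3 = 0) : x = 0 :=
  (pow_eq_zero_iff (by norm_num : (3 : ℕ) ≠ 0)).mp h

private lemma hesseAdd_smul (t x y z d1 d2 d3 : k) (q : Pt k) (ht : t ≠ 0)
    (h : hesseAdd ((x, y, z) : Pt k) q = ((d1, d2, d3) : Pt k)) :
    hesseAdd ((t * x, t * y, t * z) : Pt k) q = ((t ^ 2 * d1, t ^ 2 * d2, t ^ 2 * d3) : Pt k) := by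
  obtain ⟨x2, y2, z2⟩ := q
  have e1s : add1 ((t * x, t * y, t * z) : Pt k) ((x2, y2, z2) : Pt k)
      = ((t ^ 2 * (x * z * y2 ^ 2 - y ^ 2 * x2 * z2), t ^ 2 * (y * z * x2 ^ 2 - x ^ 2 * y2 * z2),
          t ^ 2 * (x * y * z2 ^ 2 - z ^ 2 * x2 * y2)) : Pt k) :=
    trip_ext (by ring) (by ring) (by ring)
  have e1 : add1 ((x, y, z) : Pt k) ((x2, y2, z2) : Pt k)
      = ((x * z * y2 ^ 2 - y ^ 2 * x2 * z2, y * z * x2 ^ 2 - x ^ 2 * y2 * z2,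
          x * y * z2 ^ 2 - z ^ 2 * x2 * y2) : Pt k) := rfl
  by_cases h0 : ((x * z * y2 ^ 2 - y ^ 2 * x2 * z2, y * z * x2 ^ 2 - x ^ 2 * y2 * z2,
      x * y * z2 ^ 2 - z ^ 2 * x2 * y2) : Pt k) = ((0, 0, 0) : Pt k)
  · have c1 : x * z * y2 ^ 2 - y ^ 2 * x2 * z2 = 0 := congrArg Prod.fst h0
    have c2 : y * z * x2 ^ 2 - x ^ 2 * y2 * z2 = 0 := congrArg (fun p => p.2.1) h0
    have c3 : x * y * z2 ^ 2 - z ^ 2 * x2 * y2 = 0 := congrArg (fun p => p.2.2) h0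
    have hz1 : add1 ((t * x, t * y, t * z) : Pt k) ((x2, y2, z2) : Pt k) = ((0, 0, 0) : Pt k) := by
      rw [e1s, c1, c2, c3]; exact trip_ext (by ring) (by ring) (by ring)
    rw [hesseAdd_of_add1_eq _ _ (e1.trans h0)] at h
    rw [hesseAdd_of_add1_eq _ _ hz1]
    have e2 : add2 ((x, y, z) : Pt k) ((x2, y2, z2) : Pt k)
        = ((x * y * x2 ^ 2 - z ^ 2 * y2 * z2, x * z * z2 ^ 2 - y ^ 2 * x2 * y2,
            y * z * y2 ^ 2 - x ^ 2 * x2 * z2) : Pt k) := rfl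
    rw [e2] at h
    have hd1 : x * y * x2 ^ 2 - z ^ 2 * y2 * z2 = d1 := congrArg Prod.fst h
    have hd2 : x * z * z2 ^ 2 - y ^ 2 * x2 * y2 = d2 := congrArg (fun p => p.2.1) h
    have hd3 : y * z * y2 ^ 2 - x ^ 2 * x2 * z2 = d3 := congrArg (fun p => p.2.2) h
    exact trip_ext (by rw [← hd1]; ring) (by rw [← hd2]; ring) (by rw [← hd3]; ring)
  · have hne1 : add1 ((x, y, z) : Pt k) ((x2, y2, z2) : Pt k) ≠ ((0, 0, 0) : Pt k) := by
      rw [e1]; exact h0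
    have ht2 : t ^ 2 ≠ 0 := pow_ne_zero 2 ht
    have hsne : add1 ((t * x, t * y, t * z) : Pt k) ((x2, y2, z2) : Pt k) ≠ ((0, 0, 0) : Pt k) := by
      rw [e1s]; intro hh
      apply h0
      have c1 : t ^ 2 * (x * z * y2 ^ 2 - y ^ 2 * x2 * z2) = 0 := congrArg Prod.fst hh
      have c2 : t ^ 2 * (y * z * x2 ^ 2 - x ^ 2 * y2 * z2) = 0 := congrArg (fun p => p.2.1) hh
      have c3 : t ^ 2 * (x * y * z2 ^ 2 - z ^ 2 * x2 * y2) = 0 := congrArg (fun p => p.2.2) hh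
      exact trip_ext ((mul_eq_zero.mp c1).resolve_left ht2)
        ((mul_eq_zero.mp c2).resolve_left ht2) ((mul_eq_zero.mp c3).resolve_left ht2)
    rw [hesseAdd_of_add1_ne _ _ hne1, e1] at h
    rw [hesseAdd_of_add1_ne _ _ hsne, e1s]
    have hd1 : x * z * y2 ^ 2 - y ^ 2 * x2 * z2 = d1 := congrArg Prod.fst h
    have hd2 : y * z * x2 ^ 2 - x ^ 2 * y2 * z2 = d2 := congrArg (fun p => p.2.1) h
    have hd3 : x * y * z2 ^ 2 - z ^ 2 * x2 * y2 = d3 := congrArg (fun p => p.2.2) h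
    exact trip_ext (by rw [hd1]) (by rw [hd2]) (by rw [hd3])

end Aux

private lemma tor3_iff {k : Type*} [Field k] [CharZero k] (a b c : k)
    (hne : ((a, b, c) : Pt k) ≠ (0, 0, 0)) (hE : a ^ 3 + b ^ 3 + c ^ 3 = 0) :
    isTor 3 ((a, b, c) : Pt k) ↔ a * b * c = 0 := by
  have h9 : (9 : k) ≠ 0 := by norm_num
  have key : ∀ s : k, s ≠ 0 → hesseAdd (oE : Pt k) ((a, b, c) : Pt k) = (s * a, s * b, s * c) →
      (isTor 3 ((a, b, c) : Pt k) ↔ a * b * c = 0) := by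
    intro s hs h1
    have hzdiag : add1 ((a, b, c) : Pt k) ((a, b, c) : Pt k) = ((0, 0, 0) : Pt k) :=
      trip_ext (by ring) (by ring) (by ring)
    have hD : hesseAdd ((a, b, c) : Pt k) ((a, b, c) : Pt k)
        = ((a ^ 3 * b - b * c ^ 3, a * c ^ 3 - a * b ^ 3, b ^ 3 * c - a ^ 3 * c) : Pt k) := by
      rw [hesseAdd_of_add1_eq _ _ hzdiag]
      exact trip_ext (by ring) (by ring) (by ring)
    have hnP : nP 3 ((a, b, c) : Pt k)
        = hesseAdd (hesseAdd (hesseAdd oE ((a, b, c) : Pt k)) ((a, b, c) : Pt k))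
            ((a, b, c) : Pt k) := rfl
    have hs2 : (s ^ 2 : k) ≠ 0 := pow_ne_zero 2 hs
    have hs4 : ((s ^ 2) ^ 2 : k) ≠ 0 := pow_ne_zero 2 hs2
    by_cases habc : a * b * c = 0
    · -- one coordinate vanishes: p is 3-torsion
      refine iff_of_true ?_ habc
      unfold isTor
      rcases mul_eq_zero.mp habc with hab0 | hc0
      · rcases mul_eq_zero.mp hab0 with ha0 | hb0
        · -- a = 0
          have hb : b ≠ 0 := by
            intro h
            exact hne (trip_ext ha0 h
              (cube_eq_zero (by linear_combination hE - a ^ 2 * ha0 - b ^ 2 * h)))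
          have hc : c ≠ 0 := by
            intro h
            exact hne (trip_ext ha0
              (cube_eq_zero (by linear_combination hE - a ^ 2 * ha0 - c ^ 2 * h)) h)
          have hbc : b ^ 3 + c ^ 3 = 0 := by linear_combination hE - a ^ 2 * ha0
          have hval : add1 ((a ^ 3 * b - b * c ^ 3, a * c ^ 3 - a * b ^ 3,
              b ^ 3 * c - a ^ 3 * c) : Pt k) ((a, b, c) : Pt k)
              = ((-(b ^ 6 * c ^ 4), -(b ^ 3 * c ^ 7), 0) : Pt k) :=
            trip_ext
              (by linear_combination (-1*a^2*c^7 + 3*a^2*b^3*c^4 - 1*a^5*b^3*c) * ha0)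
              (by linear_combination (3*a^2*b^3*c^4 - 1*a^2*b^6*c - 1*a^5*c^4) * ha0)
              (by linear_combination (-1*b*c^8 + b^4*c^5 - 1*b^7*c^2 + a^3*b*c^5 + a^3*b^4*c^2
                - 1*a^6*b*c^2) * ha0)
          have hX : ((s ^ 2) ^ 2 * -(b ^ 6 * c ^ 4) : k) ≠ 0 :=
            mul_ne_zero hs4 (neg_ne_zero.2 (mul_ne_zero (pow_ne_zero 6 hb) (pow_ne_zero 4 hc)))
          have hV : hesseAdd ((a ^ 3 * b - b * c ^ 3, a * c ^ 3 - a * b ^ 3,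
              b ^ 3 * c - a ^ 3 * c) : Pt k) ((a, b, c) : Pt k)
              = ((-(b ^ 6 * c ^ 4), -(b ^ 3 * c ^ 7), 0) : Pt k) := by
            rw [hesseAdd_of_add1_ne _ _ (by
              rw [hval]
              exact ne_fst (neg_ne_zero.2 (mul_ne_zero (pow_ne_zero 6 hb) (pow_ne_zero 4 hc))))]
            exact hval
          rw [hnP, h1, hesseAdd_smul s a b c _ _ _ _ hs hD,
            hesseAdd_smul (s ^ 2) _ _ _ _ _ _ _ hs2 hV]
          refine ⟨((s ^ 2) ^ 2 * -(b ^ 6 * c ^ 4))⁻¹, inv_ne_zero hX, ?_⟩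
          show (oE : Pt k) = (((s ^ 2) ^ 2 * -(b ^ 6 * c ^ 4))⁻¹ * ((s ^ 2) ^ 2 * -(b ^ 6 * c ^ 4)),
            ((s ^ 2) ^ 2 * -(b ^ 6 * c ^ 4))⁻¹ * ((s ^ 2) ^ 2 * -(b ^ 3 * c ^ 7)),
            ((s ^ 2) ^ 2 * -(b ^ 6 * c ^ 4))⁻¹ * ((s ^ 2) ^ 2 * (0 : k)))
          have hYX : ((s ^ 2) ^ 2 * -(b ^ 3 * c ^ 7) : k) = -((s ^ 2) ^ 2 * -(b ^ 6 * c ^ 4)) := by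
            linear_combination (-(s ^ 2) ^ 2 * b ^ 3 * c ^ 4) * hbc
          rw [show (oE : Pt k) = ((1 : k), (-1 : k), (0 : k)) from rfl]
          exact trip_ext (inv_mul_cancel₀ hX).symm
            (by rw [hYX, mul_neg, inv_mul_cancel₀ hX]) (by ring)
        · -- b = 0
          have ha : a ≠ 0 := by
            intro h
            exact hne (trip_ext h hb0
              (cube_eq_zero (by linear_combination hE - a ^ 2 * h - b ^ 2 * hb0)))
          have hc : c ≠ 0 := by
            intro h
            exact hne (trip_ext
              (cube_eq_zero (by linear_combination hE - b ^ 2 * hb0 - c ^ 2 * h)) hb0 h)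
          have hac : a ^ 3 + c ^ 3 = 0 := by linear_combination hE - b ^ 2 * hb0
          have hval : add1 ((a ^ 3 * b - b * c ^ 3, a * c ^ 3 - a * b ^ 3,
              b ^ 3 * c - a ^ 3 * c) : Pt k) ((a, b, c) : Pt k)
              = ((-(a ^ 3 * c ^ 7), -(a ^ 6 * c ^ 4), 0) : Pt k) :=
            trip_ext
              (by linear_combination (-1*b^5*c^4 + 3*a^3*b^2*c^4 - 1*a^6*b^2*c) * hb0)
              (by linear_combination (-1*b^2*c^7 + 3*a^3*b^2*c^4 - 1*a^3*b^5*c) * hb0)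
              (by linear_combination (-1*a*c^8 + a*b^3*c^5 - 1*a*b^6*c^2 + a^4*c^5 + a^4*b^3*c^2
                - 1*a^7*c^2) * hb0)
          have hX : ((s ^ 2) ^ 2 * -(a ^ 3 * c ^ 7) : k) ≠ 0 :=
            mul_ne_zero hs4 (neg_ne_zero.2 (mul_ne_zero (pow_ne_zero 3 ha) (pow_ne_zero 7 hc)))
          have hV : hesseAdd ((a ^ 3 * b - b * c ^ 3, a * c ^ 3 - a * b ^ 3,
              b ^ 3 * c - a ^ 3 * c) : Pt k) ((a, b, c) : Pt k)
              = ((-(a ^ 3 * c ^ 7), -(a ^ 6 * c ^ 4), 0) : Pt k) := by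
            rw [hesseAdd_of_add1_ne _ _ (by
              rw [hval]
              exact ne_fst (neg_ne_zero.2 (mul_ne_zero (pow_ne_zero 3 ha) (pow_ne_zero 7 hc))))]
            exact hval
          rw [hnP, h1, hesseAdd_smul s a b c _ _ _ _ hs hD,
            hesseAdd_smul (s ^ 2) _ _ _ _ _ _ _ hs2 hV]
          refine ⟨((s ^ 2) ^ 2 * -(a ^ 3 * c ^ 7))⁻¹, inv_ne_zero hX, ?_⟩
          show (oE : Pt k) = (((s ^ 2) ^ 2 * -(a ^ 3 * c ^ 7))⁻¹ * ((s ^ 2) ^ 2 * -(a ^ 3 * c ^ 7)),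
            ((s ^ 2) ^ 2 * -(a ^ 3 * c ^ 7))⁻¹ * ((s ^ 2) ^ 2 * -(a ^ 6 * c ^ 4)),
            ((s ^ 2) ^ 2 * -(a ^ 3 * c ^ 7))⁻¹ * ((s ^ 2) ^ 2 * (0 : k)))
          have hYX : ((s ^ 2) ^ 2 * -(a ^ 6 * c ^ 4) : k) = -((s ^ 2) ^ 2 * -(a ^ 3 * c ^ 7)) := by
            linear_combination (-(s ^ 2) ^ 2 * a ^ 3 * c ^ 4) * hac
          rw [show (oE : Pt k) = ((1 : k), (-1 : k), (0 : k)) from rfl]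
          exact trip_ext (inv_mul_cancel₀ hX).symm
            (by rw [hYX, mul_neg, inv_mul_cancel₀ hX]) (by ring)
      · -- c = 0
        have ha : a ≠ 0 := by
          intro h
          exact hne (trip_ext h
            (cube_eq_zero (by linear_combination hE - a ^ 2 * h - c ^ 2 * hc0)) hc0)
        have hb : b ≠ 0 := by
          intro h
          exact hne (trip_ext
            (cube_eq_zero (by linear_combination hE - b ^ 2 * h - c ^ 2 * hc0)) h hc0)
        have hab : a ^ 3 + b ^ 3 = 0 := by linear_combination hE - c ^ 2 * hc0
        have hz0 : add1 ((a ^ 3 * b - b * c ^ 3, a * c ^ 3 - a * b ^ 3,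
            b ^ 3 * c - a ^ 3 * c) : Pt k) ((a, b, c) : Pt k) = ((0, 0, 0) : Pt k) :=
          trip_ext
            (by linear_combination (-1*b^6*c^3 - 1*a^3*c^6 + 3*a^3*b^3*c^3 - 1*a^6*b^3) * hc0)
            (by linear_combination (-1*b^3*c^6 + 3*a^3*b^3*c^3 - 1*a^3*b^6 - 1*a^6*c^3) * hc0)
            (by linear_combination (-1*a*b*c^7 + a*b^4*c^4 - 1*a*b^7*c + a^4*b*c^4 + a^4*b^4*c
              - 1*a^7*b*c) * hc0)
        have hV : hesseAdd ((a ^ 3 * b - b * c ^ 3, a * c ^ 3 - a * b ^ 3,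
            b ^ 3 * c - a ^ 3 * c) : Pt k) ((a, b, c) : Pt k)
            = ((-(a ^ 6 * b ^ 4), -(a ^ 3 * b ^ 7), 0) : Pt k) := by
          rw [hesseAdd_of_add1_eq _ _ hz0]
          exact trip_ext
            (by linear_combination (-1*b^7*c^2 - 1*a^3*b*c^5 + 3*a^3*b^4*c^2) * hc0)
            (by linear_combination (-1*b^4*c^5 + 3*a^3*b^4*c^2 - 1*a^6*b*c^2) * hc0)
            (by linear_combination (-1*a*b^2*c^6 + a*b^5*c^3 - 1*a*b^8 + a^4*b^2*c^3 + a^4*b^5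
              - 1*a^7*b^2) * hc0)
        have hX : ((s ^ 2) ^ 2 * -(a ^ 6 * b ^ 4) : k) ≠ 0 :=
          mul_ne_zero hs4 (neg_ne_zero.2 (mul_ne_zero (pow_ne_zero 6 ha) (pow_ne_zero 4 hb)))
        rw [hnP, h1, hesseAdd_smul s a b c _ _ _ _ hs hD,
          hesseAdd_smul (s ^ 2) _ _ _ _ _ _ _ hs2 hV]
        refine ⟨((s ^ 2) ^ 2 * -(a ^ 6 * b ^ 4))⁻¹, inv_ne_zero hX, ?_⟩
        show (oE : Pt k) = (((s ^ 2) ^ 2 * -(a ^ 6 * b ^ 4))⁻¹ * ((s ^ 2) ^ 2 * -(a ^ 6 * b ^ 4)),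
          ((s ^ 2) ^ 2 * -(a ^ 6 * b ^ 4))⁻¹ * ((s ^ 2) ^ 2 * -(a ^ 3 * b ^ 7)),
          ((s ^ 2) ^ 2 * -(a ^ 6 * b ^ 4))⁻¹ * ((s ^ 2) ^ 2 * (0 : k)))
        have hYX : ((s ^ 2) ^ 2 * -(a ^ 3 * b ^ 7) : k) = -((s ^ 2) ^ 2 * -(a ^ 6 * b ^ 4)) := by
          linear_combination (-(s ^ 2) ^ 2 * a ^ 3 * b ^ 4) * hab
        rw [show (oE : Pt k) = ((1 : k), (-1 : k), (0 : k)) from rfl]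
        exact trip_ext (inv_mul_cancel₀ hX).symm
          (by rw [hYX, mul_neg, inv_mul_cancel₀ hX]) (by ring)
    · -- all coordinates nonzero: p is not 3-torsion
      have ha : a ≠ 0 := fun h => habc (by rw [h]; ring)
      have hb : b ≠ 0 := fun h => habc (by rw [h]; ring)
      have hc : c ≠ 0 := fun h => habc (by rw [h]; ring)
      refine iff_of_false ?_ habc
      unfold isTor
      have hXY : ((a ^ 3 * b - b * c ^ 3) * (b ^ 3 * c - a ^ 3 * c) * b ^ 2
            - (a * c ^ 3 - a * b ^ 3) ^ 2 * a * c)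
          + ((a * c ^ 3 - a * b ^ 3) * (b ^ 3 * c - a ^ 3 * c) * a ^ 2
            - (a ^ 3 * b - b * c ^ 3) ^ 2 * b * c)
          = 9 * a ^ 3 * b ^ 3 * c ^ 4 := by
        linear_combination (-(a ^ 3 * c ^ 4) - b ^ 3 * c ^ 4 - a ^ 3 * b ^ 3 * c) * hE
      have hval : add1 ((a ^ 3 * b - b * c ^ 3, a * c ^ 3 - a * b ^ 3,
          b ^ 3 * c - a ^ 3 * c) : Pt k) ((a, b, c) : Pt k)
          = (((a ^ 3 * b - b * c ^ 3) * (b ^ 3 * c - a ^ 3 * c) * b ^ 2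
              - (a * c ^ 3 - a * b ^ 3) ^ 2 * a * c,
             (a * c ^ 3 - a * b ^ 3) * (b ^ 3 * c - a ^ 3 * c) * a ^ 2
              - (a ^ 3 * b - b * c ^ 3) ^ 2 * b * c,
             (a ^ 3 * b - b * c ^ 3) * (a * c ^ 3 - a * b ^ 3) * c ^ 2
              - (b ^ 3 * c - a ^ 3 * c) ^ 2 * a * b) : Pt k) := rfl
      have h9abc : (9 * a ^ 3 * b ^ 3 * c ^ 4 : k) ≠ 0 :=
        mul_ne_zero (mul_ne_zero (mul_ne_zero h9 (pow_ne_zero 3 ha)) (pow_ne_zero 3 hb))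
          (pow_ne_zero 4 hc)
      have hne1 : add1 ((a ^ 3 * b - b * c ^ 3, a * c ^ 3 - a * b ^ 3,
          b ^ 3 * c - a ^ 3 * c) : Pt k) ((a, b, c) : Pt k) ≠ ((0, 0, 0) : Pt k) := by
        rw [hval]
        intro hh
        have e1 : (a ^ 3 * b - b * c ^ 3) * (b ^ 3 * c - a ^ 3 * c) * b ^ 2
            - (a * c ^ 3 - a * b ^ 3) ^ 2 * a * c = 0 := congrArg Prod.fst hh
        have e2 : (a * c ^ 3 - a * b ^ 3) * (b ^ 3 * c - a ^ 3 * c) * a ^ 2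
            - (a ^ 3 * b - b * c ^ 3) ^ 2 * b * c = 0 := congrArg (fun p => p.2.1) hh
        exact h9abc (by linear_combination e1 + e2 - hXY)
      have hV := (hesseAdd_of_add1_ne _ _ hne1).trans hval
      rw [hnP, h1, hesseAdd_smul s a b c _ _ _ _ hs hD,
        hesseAdd_smul (s ^ 2) _ _ _ _ _ _ _ hs2 hV]
      rintro ⟨t, ht, heq⟩
      have e1 : (1 : k) = t * ((s ^ 2) ^ 2 * ((a ^ 3 * b - b * c ^ 3) * (b ^ 3 * c - a ^ 3 * c)
          * b ^ 2 - (a * c ^ 3 - a * b ^ 3) ^ 2 * a * c)) := congrArg Prod.fst heq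
      have e2 : (-1 : k) = t * ((s ^ 2) ^ 2 * ((a * c ^ 3 - a * b ^ 3) * (b ^ 3 * c - a ^ 3 * c)
          * a ^ 2 - (a ^ 3 * b - b * c ^ 3) ^ 2 * b * c)) := congrArg (fun p => p.2.1) heq
      have hcontra : t * (s ^ 2) ^ 2 * (9 * a ^ 3 * b ^ 3 * c ^ 4) = 0 := by
        linear_combination (-1 : k) * e1 - e2 - (t * (s ^ 2) ^ 2) * hXY
      exact mul_ne_zero (mul_ne_zero ht hs4) h9abc hcontra
  -- produce the scalar s
  by_cases hc : c = 0
  · have ha : a ≠ 0 := by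
      intro h
      exact hne (trip_ext h
        (cube_eq_zero (by linear_combination hE - a ^ 2 * h - c ^ 2 * hc)) hc)
    refine key (-a) (neg_ne_zero.2 ha) ?_
    rw [show (oE : Pt k) = ((1 : k), (-1 : k), (0 : k)) from rfl]
    have hz : add1 (((1 : k), (-1 : k), (0 : k)) : Pt k) ((a, b, c) : Pt k) = ((0, 0, 0) : Pt k) :=
      trip_ext (by linear_combination (-a) * hc) (by linear_combination (-b) * hc)
        (by linear_combination (-c) * hc)
    rw [hesseAdd_of_add1_eq _ _ hz]
    exact trip_ext (by ring) (by ring) (by ring)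
  · refine key (-c) (neg_ne_zero.2 hc) ?_
    rw [show (oE : Pt k) = ((1 : k), (-1 : k), (0 : k)) from rfl]
    have hval : add1 (((1 : k), (-1 : k), (0 : k)) : Pt k) ((a, b, c) : Pt k) = ((-c * a, -c * b, -c * c) : Pt k) :=
      trip_ext (by ring) (by ring) (by ring)
    rw [hesseAdd_of_add1_ne _ _ (by
      rw [hval]; exact ne_trd (mul_ne_zero (neg_ne_zero.2 hc) hc))]
    exact hval

/-- For the Fermat cubic `E = V(x³+y³+z³)` and `τ₂(a:b:c) = (b:a:cε)`,
`U_{τ₂} = {p ∈ E : p - τ₂(p) ∈ E[3]}` equals `E[3]`. -/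
theorem fermat_U_tau2_eq_threeTorsion {k : Type*} [Field k] [IsAlgClosed k] [CharZero k]
    (eps : k) (heps : IsPrimitiveRoot eps 3)
    (p : Pt k) (hne : p ≠ (0, 0, 0)) (hE : onHesse (0 : k) p) :
    isTor 3 (hesseSub p (tau2 eps p)) ↔ isTor 3 p := by
  obtain ⟨a, b, c⟩ := p
  have hE0 : a ^ 3 + b ^ 3 + c ^ 3 - 3 * 0 * a * b * c = 0 := hE
  have hE' : a ^ 3 + b ^ 3 + c ^ 3 = 0 := by linear_combination hE0
  have he3 : eps ^ 3 = 1 := heps.pow_eq_one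
  have hene1 : eps ≠ 1 := heps.ne_one (by norm_num)
  have heps0 : eps ≠ 0 := by
    intro h; rw [h] at he3; norm_num at he3
  have hsub : hesseSub ((a, b, c) : Pt k) (tau2 eps ((a, b, c) : Pt k))
      = hesseAdd ((a, b, c) : Pt k) ((a, b, c * eps) : Pt k) := rfl
  rw [hsub]
  by_cases habc : a * b * c = 0
  · rcases mul_eq_zero.mp habc with hab0 | hc0
    · rcases mul_eq_zero.mp hab0 with ha0 | hb0
      · -- a = 0
        have hb : b ≠ 0 := by
          intro h
          exact hne (trip_ext ha0 h
            (cube_eq_zero (by linear_combination hE' - a ^ 2 * ha0 - b ^ 2 * h)))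
        have hc : c ≠ 0 := by
          intro h
          exact hne (trip_ext ha0
            (cube_eq_zero (by linear_combination hE' - a ^ 2 * ha0 - c ^ 2 * h)) h)
        have hbc : b ^ 3 + c ^ 3 = 0 := by linear_combination hE' - a ^ 2 * ha0
        have hz : add1 ((a, b, c) : Pt k) ((a, b, c * eps) : Pt k) = ((0, 0, 0) : Pt k) :=
          trip_ext (by linear_combination (b - b * eps) * habc)
            (by linear_combination (a - a * eps) * habc)
            (by linear_combination (c * eps ^ 2 - c) * habc)
        have hq : hesseAdd ((a, b, c) : Pt k) ((a, b, c * eps) : Pt k)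
            = ((-(b * c ^ 3 * eps), 0, b ^ 3 * c) : Pt k) := by
          rw [hesseAdd_of_add1_eq _ _ hz]
          exact trip_ext (by linear_combination (b * a ^ 2) * ha0)
            (by linear_combination (c * (c * eps) ^ 2 - b ^ 2 * b) * ha0)
            (by linear_combination (-(a ^ 2 * c * eps)) * ha0)
        have hqne : ((-(b * c ^ 3 * eps), 0, b ^ 3 * c) : Pt k) ≠ (0, 0, 0) :=
          ne_fst (neg_ne_zero.2 (mul_ne_zero (mul_ne_zero hb (pow_ne_zero 3 hc)) heps0))
        have hqE : (-(b * c ^ 3 * eps)) ^ 3 + (0 : k) ^ 3 + (b ^ 3 * c) ^ 3 = 0 := by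
          linear_combination (-(b ^ 3 * c ^ 9)) * he3 + (b ^ 3 * c ^ 3 * (b ^ 3 - c ^ 3)) * hbc
        rw [hq, tor3_iff _ _ _ hqne hqE, tor3_iff a b c hne hE']
        exact iff_of_true (by ring) habc
      · -- b = 0
        have ha : a ≠ 0 := by
          intro h
          exact hne (trip_ext h hb0
            (cube_eq_zero (by linear_combination hE' - a ^ 2 * h - b ^ 2 * hb0)))
        have hc : c ≠ 0 := by
          intro h
          exact hne (trip_ext
            (cube_eq_zero (by linear_combination hE' - b ^ 2 * hb0 - c ^ 2 * h)) hb0 h)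
        have hac : a ^ 3 + c ^ 3 = 0 := by linear_combination hE' - b ^ 2 * hb0
        have hz : add1 ((a, b, c) : Pt k) ((a, b, c * eps) : Pt k) = ((0, 0, 0) : Pt k) :=
          trip_ext (by linear_combination (b - b * eps) * habc)
            (by linear_combination (a - a * eps) * habc)
            (by linear_combination (c * eps ^ 2 - c) * habc)
        have hq : hesseAdd ((a, b, c) : Pt k) ((a, b, c * eps) : Pt k)
            = ((0, a * c ^ 3 * eps ^ 2, -(a ^ 3 * c * eps)) : Pt k) := by
          rw [hesseAdd_of_add1_eq _ _ hz]
          exact trip_ext (by linear_combination (a ^ 3 - c ^ 3 * eps) * hb0)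
            (by linear_combination (-(a * b ^ 2)) * hb0)
            (by linear_combination (c * b ^ 2) * hb0)
        have hqne : ((0, a * c ^ 3 * eps ^ 2, -(a ^ 3 * c * eps)) : Pt k) ≠ (0, 0, 0) :=
          ne_snd (mul_ne_zero (mul_ne_zero ha (pow_ne_zero 3 hc)) (pow_ne_zero 2 heps0))
        have hqE : (0 : k) ^ 3 + (a * c ^ 3 * eps ^ 2) ^ 3 + (-(a ^ 3 * c * eps)) ^ 3 = 0 := by
          linear_combination (a ^ 3 * c ^ 9 * (eps ^ 3 + 1) - a ^ 9 * c ^ 3) * he3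
            + (a ^ 3 * c ^ 3 * (c ^ 3 - a ^ 3)) * hac
        rw [hq, tor3_iff _ _ _ hqne hqE, tor3_iff a b c hne hE']
        exact iff_of_true (by ring) habc
    · -- c = 0
      have ha : a ≠ 0 := by
        intro h
        exact hne (trip_ext h
          (cube_eq_zero (by linear_combination hE' - a ^ 2 * h - c ^ 2 * hc0)) hc0)
      have hb : b ≠ 0 := by
        intro h
        exact hne (trip_ext
          (cube_eq_zero (by linear_combination hE' - b ^ 2 * h - c ^ 2 * hc0)) h hc0)
      have hab : a ^ 3 + b ^ 3 = 0 := by linear_combination hE' - c ^ 2 * hc0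
      have hz : add1 ((a, b, c) : Pt k) ((a, b, c * eps) : Pt k) = ((0, 0, 0) : Pt k) :=
        trip_ext (by linear_combination (b - b * eps) * habc)
          (by linear_combination (a - a * eps) * habc)
          (by linear_combination (c * eps ^ 2 - c) * habc)
      have hq : hesseAdd ((a, b, c) : Pt k) ((a, b, c * eps) : Pt k)
          = ((a ^ 3 * b, -(a * b ^ 3), 0) : Pt k) := by
        rw [hesseAdd_of_add1_eq _ _ hz]
        exact trip_ext (by linear_combination (-(c ^ 2 * b * eps)) * hc0)
          (by linear_combination (a * c ^ 2 * eps ^ 2) * hc0)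
          (by linear_combination (b * b ^ 2 - a ^ 2 * a * eps) * hc0)
      have hqne : ((a ^ 3 * b, -(a * b ^ 3), 0) : Pt k) ≠ (0, 0, 0) :=
        ne_fst (mul_ne_zero (pow_ne_zero 3 ha) hb)
      have hqE : (a ^ 3 * b) ^ 3 + (-(a * b ^ 3)) ^ 3 + (0 : k) ^ 3 = 0 := by
        linear_combination (a ^ 3 * b ^ 3 * (a ^ 3 - b ^ 3)) * hab
      rw [hq, tor3_iff _ _ _ hqne hqE, tor3_iff a b c hne hE']
      exact iff_of_true (by ring) habc
  · -- a, b, c all nonzero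
    have ha : a ≠ 0 := fun h => habc (by rw [h]; ring)
    have hb : b ≠ 0 := fun h => habc (by rw [h]; ring)
    have hc : c ≠ 0 := fun h => habc (by rw [h]; ring)
    have hme : (1 - eps : k) ≠ 0 := sub_ne_zero.2 (Ne.symm hene1)
    have hMne : (a * b * c * (1 - eps) : k) ≠ 0 := mul_ne_zero habc hme
    have hz : add1 ((a, b, c) : Pt k) ((a, b, c * eps) : Pt k)
        = ((a * b * c * (1 - eps) * b, a * b * c * (1 - eps) * a,
            a * b * c * (1 - eps) * (c * eps ^ 2)) : Pt k) :=
      trip_ext (by ring) (by ring) (by linear_combination (a * b * c ^ 2) * he3)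
    have hq : hesseAdd ((a, b, c) : Pt k) ((a, b, c * eps) : Pt k)
        = ((a * b * c * (1 - eps) * b, a * b * c * (1 - eps) * a,
            a * b * c * (1 - eps) * (c * eps ^ 2)) : Pt k) := by
      rw [hesseAdd_of_add1_ne _ _ (by rw [hz]; exact ne_fst (mul_ne_zero hMne hb))]
      exact hz
    have hqne : ((a * b * c * (1 - eps) * b, a * b * c * (1 - eps) * a,
        a * b * c * (1 - eps) * (c * eps ^ 2)) : Pt k) ≠ (0, 0, 0) :=
      ne_fst (mul_ne_zero hMne hb)
    have hqE : (a * b * c * (1 - eps) * b) ^ 3 + (a * b * c * (1 - eps) * a) ^ 3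
        + (a * b * c * (1 - eps) * (c * eps ^ 2)) ^ 3 = 0 := by
      linear_combination ((a * b * c * (1 - eps)) ^ 3) * hE'
        + ((a * b * c * (1 - eps)) ^ 3 * c ^ 3 * (eps ^ 3 + 1)) * he3
    rw [hq, tor3_iff _ _ _ hqne hqE, tor3_iff a b c hne hE']
    refine iff_of_false ?_ habc
    exact mul_ne_zero (mul_ne_zero (mul_ne_zero hMne hb) (mul_ne_zero hMne ha))
      (mul_ne_zero hMne (mul_ne_zero hc (pow_ne_zero 2 heps0)))
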